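/- Let 𝒜 be a skeletally small abelian category and let X be an object of 𝒜 which is subobject cocomplete. Then there exists a lower composition series of X. Moreover, for any pre-subobject chain Δ of X: (1) if Δ admits no proper refinement (i.e., Δ is not a proper subset of any larger totally ordered set of subobjects of X), then Δ is a lower composition series; (2) there exists a lower composition series Δ' of X with Δ ⊆ Δ'. The same statements hold with 'subobject cocomplete' replaced by 'subobject complete' and 'lower composition series' replaced by 'upper composition series'. -/

import Mathlib

open CategoryTheory CategoryTheory.Limits

universe w v u

namespace JHS

variable {𝒜 : Type u} [Category.{v} 𝒜] [Abelian 𝒜]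

variable {X : 𝒜}

/-- The diagram in `𝒜` associated to a set of subobjects of `X`, given by the underlying
objects and the canonical inclusion monomorphisms between them. -/
@[simps]
noncomputable def chainDiagram (Δ : Set (Subobject X)) : Δ ⥤ 𝒜 where
  obj Y := (Y.1 : 𝒜)
  map {Y Z} f := Subobject.ofLE Y.1 Z.1 (leOfHom f)
  map_id Y := Subobject.ofLE_refl Y.1
  map_comp {Y Z W} f g := (Subobject.ofLE_comp_ofLE Y.1 Z.1 W.1 (leOfHom f) (leOfHom g)).symm

/-- The cocone over the diagram of a set of subobjects of `X` with vertex an upper bound. -/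
@[simps]
noncomputable def chainCocone (Δ : Set (Subobject X)) (W : Subobject X) (h : ∀ Y ∈ Δ, Y ≤ W) :
    Cocone (chainDiagram Δ) where
  pt := (W : 𝒜)
  ι :=
    { app := fun Y => Subobject.ofLE Y.1 W (h Y.1 Y.2)
      naturality := fun Y Z f => by
        simp [chainDiagram, Subobject.ofLE_comp_ofLE] }

/-- The cone over the diagram of a set of subobjects of `X` with vertex a lower bound. -/
@[simps]
noncomputable def chainCone (Δ : Set (Subobject X)) (W : Subobject X) (h : ∀ Y ∈ Δ, W ≤ Y) :
    Cone (chainDiagram Δ) where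
  pt := (W : 𝒜)
  π :=
    { app := fun Y => Subobject.ofLE W Y.1 (h Y.1 Y.2)
      naturality := fun Y Z f => by
        simp [chainDiagram, Subobject.ofLE_comp_ofLE] }

/-- `W` is the colimit of the chain `Δ` of subobjects of `X`, as a subobject of `X`:
the colimit of the diagram of inclusions exists and the induced morphism to `X` is a
monomorphism with image `W`.  Equivalently, the canonical cocone with vertex `W` is a
colimit cocone. -/
def IsColimSub (Δ : Set (Subobject X)) (W : Subobject X) : Prop :=
  ∃ h : ∀ Y ∈ Δ, Y ≤ W, Nonempty (IsColimit (chainCocone Δ W h))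

/-- `W` is the limit of the chain `Δ` of subobjects of `X` (such a limit is automatically a
subobject of `X`): the canonical cone with vertex `W` is a limit cone. -/
def IsLimSub (Δ : Set (Subobject X)) (W : Subobject X) : Prop :=
  ∃ h : ∀ Y ∈ Δ, W ≤ Y, Nonempty (IsLimit (chainCone Δ W h))

/-- A pre-subobject chain: a set of subobjects totally ordered under inclusion. -/
def IsPreChain (Δ : Set (Subobject X)) : Prop :=
  IsChain (· ≤ ·) Δ

/-- A subobject chain: a pre-subobject chain containing `⊥ = 0` and `⊤ = X`. -/
def IsSubChain (Δ : Set (Subobject X)) : Prop :=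
  IsPreChain Δ ∧ ⊥ ∈ Δ ∧ ⊤ ∈ Δ

/-- A chain is cocomplete if every subset has a colimit which is a subobject of `X` and
lies in the chain. -/
def Cocomplete (Δ : Set (Subobject X)) : Prop :=
  ∀ Δ' ⊆ Δ, ∃ W ∈ Δ, IsColimSub Δ' W

/-- A chain is complete if every subset has a limit which lies in the chain. -/
def Complete (Δ : Set (Subobject X)) : Prop :=
  ∀ Δ' ⊆ Δ, ∃ W ∈ Δ, IsLimSub Δ' W

/-- A chain is bicomplete if it is both cocomplete and complete. -/
def Bicomplete (Δ : Set (Subobject X)) : Prop :=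
  Cocomplete Δ ∧ Complete Δ

/-- `W = Y⁻_Δ` is the predecessor of `Y` in `Δ`: the colimit of `{Z ∈ Δ | Z ⊊ Y}`,
with the convention `0⁻_Δ = 0`. -/
def IsPred (Δ : Set (Subobject X)) (Y W : Subobject X) : Prop :=
  (Y = ⊥ ∧ W = ⊥) ∨ (Y ≠ ⊥ ∧ IsColimSub {Z | Z ∈ Δ ∧ Z < Y} W)

/-- `W = Y⁺_Δ` is the successor of `Y` in `Δ`: the limit of `{Z ∈ Δ | Y ⊊ Z}`,
with the convention `X⁺_Δ = X`. -/
def IsSucc (Δ : Set (Subobject X)) (Y W : Subobject X) : Prop :=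
  (Y = ⊤ ∧ W = ⊤) ∨ (Y ≠ ⊤ ∧ IsLimSub {Z | Z ∈ Δ ∧ Y < Z} W)

/-- The quotient (subfactor) `Y/W` of two nested subobjects of `X`: the cokernel of the
inclusion `W → Y`. -/
noncomputable def quot (W Y : Subobject X) (h : W ≤ Y) : 𝒜 :=
  cokernel (Subobject.ofLE W Y h)

/-- A composition series of `X`: a bicomplete subobject chain all of whose subfactors
`Y/Y⁻_Δ` (for `Y ∈ Δ` with `Y ≠ Y⁻_Δ`) are simple. -/
def IsCompSeries (Δ : Set (Subobject X)) : Prop :=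
  IsSubChain Δ ∧ Bicomplete Δ ∧
    ∀ Y ∈ Δ, ∀ (W) (h : W ≤ Y), IsPred Δ Y W → W ≠ Y → Simple (quot W Y h)

variable (X) in
/-- Axiom (JHS1): `X` is subobject cocomplete. -/
def JHS1 : Prop :=
  ∀ Δ : Set (Subobject X), IsPreChain Δ → ∃ W, IsColimSub Δ W

variable (X) in
/-- Axiom (JHS2): `X` is subobject complete. -/
def JHS2 : Prop :=
  ∀ Δ : Set (Subobject X), IsPreChain Δ → ∃ W, IsLimSub Δ W

variable (X) in
/-- Axiom (JHS3). -/
def JHS3 : Prop :=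
  JHS1 X ∧ ∀ (Δ : Set (Subobject X)) (Z W : Subobject X),
    IsPreChain Δ → IsColimSub Δ W → IsColimSub ((· ⊓ Z) '' Δ) (W ⊓ Z)

variable (X) in
/-- Axiom (JHS4). -/
def JHS4 : Prop :=
  JHS2 X ∧ ∀ (Δ : Set (Subobject X)) (Z W : Subobject X),
    IsPreChain Δ → IsLimSub Δ W → IsLimSub ((· ⊔ Z) '' Δ) (W ⊔ Z)

variable (X) in
/-- `X` is weakly Jordan–Hölder–Schreier. -/
def WeaklyJHS : Prop :=
  JHS3 X ∧ JHS4 X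

variable (X) in
/-- Axiom (JHS5): if `X ≠ 0`, every composition series of `X` has a nonempty subfactor
multiset. -/
def JHS5 : Prop :=
  ¬ IsZero X → ∀ Δ : Set (Subobject X), IsCompSeries Δ →
    ∃ Y ∈ Δ, ∃ W, IsPred Δ Y W ∧ W ≠ Y

variable (X) in
/-- `X` is Jordan–Hölder–Schreier. -/
def IsJHS : Prop :=
  WeaklyJHS X ∧ JHS5 X

/-- The index set of the lower subfactor multiset `sf⁻(Δ)`: elements `Y ∈ Δ` admitting a
predecessor `Y⁻_Δ ≠ Y`. -/
def lowerIdx (Δ : Set (Subobject X)) : Type _ :=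
  {Y : Subobject X // Y ∈ Δ ∧ ∃ W, IsPred Δ Y W ∧ W ≠ Y}

/-- The index set of the upper subfactor multiset `sf⁺(Δ)`: elements `Y ∈ Δ` admitting a
successor `Y⁺_Δ ≠ Y`. -/
def upperIdx (Δ : Set (Subobject X)) : Type _ :=
  {Y : Subobject X // Y ∈ Δ ∧ ∃ W, IsSucc Δ Y W ∧ W ≠ Y}

/-- Subfactor equivalence of two chains: a bijection of the index sets of their subfactor
multisets under which corresponding subfactors are isomorphic. -/
def SubfactorEquiv (Δ Γ : Set (Subobject X)) : Prop :=
  ∃ e : lowerIdx Δ ≃ lowerIdx Γ,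
    ∀ (Y : lowerIdx Δ) (W : Subobject X) (hW : W ≤ Y.1) (V : Subobject X)
      (hV : V ≤ (e Y).1),
      IsPred Δ Y.1 W → IsPred Γ (e Y).1 V →
      Nonempty (quot W Y.1 hW ≅ quot V (e Y).1 hV)

/-- The lower conflation `con⁻(Δ, Γ)`. -/
def conLower (Δ Γ : Set (Subobject X)) : Set (Subobject X) :=
  Δ ∪ {V | ∃ Y ∈ Δ, ∃ Z ∈ Γ, ∃ W, IsPred Δ Y W ∧ V = W ⊔ (Y ⊓ Z)}

/-- The upper conflation `con⁺(Δ, Γ)`. -/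
def conUpper (Δ Γ : Set (Subobject X)) : Set (Subobject X) :=
  Δ ∪ {V | ∃ Y ∈ Δ, ∃ Z ∈ Γ, ∃ W, IsSucc Δ Y W ∧ V = Y ⊔ (W ⊓ Z)}

/-- A lower composition series: a cocomplete subobject chain all of whose lower subfactors
`Y/Y⁻_Δ` (for `Y ∈ Δ` with `Y ≠ Y⁻_Δ`) are simple. -/
def IsLowerCompSeries (Δ : Set (Subobject X)) : Prop :=
  IsSubChain Δ ∧ Cocomplete Δ ∧
    ∀ Y ∈ Δ, ∀ (W) (h : W ≤ Y), IsPred Δ Y W → W ≠ Y → Simple (quot W Y h)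

/-- An upper composition series: a complete subobject chain all of whose upper subfactors
`Y⁺_Δ/Y` (for `Y ∈ Δ` with `Y ≠ Y⁺_Δ`) are simple. -/
def IsUpperCompSeries (Δ : Set (Subobject X)) : Prop :=
  IsSubChain Δ ∧ Complete Δ ∧
    ∀ Y ∈ Δ, ∀ (W) (h : Y ≤ W), IsSucc Δ Y W → W ≠ Y → Simple (quot Y W h)

/-! ### Auxiliary lemmas for the proof of Proposition 3.14 -/

/-- A colimit of a set of subobjects is a least upper bound. -/
theorem colimSub_le {Δ' : Set (Subobject X)} {W Z : Subobject X}
    (hc : IsColimSub Δ' W) (hZ : ∀ Y ∈ Δ', Y ≤ Z) : W ≤ Z := by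
  obtain ⟨hW, ⟨c⟩⟩ := hc
  refine Subobject.le_of_comm (c.desc (chainCocone Δ' Z hZ)) ?_
  apply c.hom_ext
  intro Y
  erw [← Category.assoc, c.fac (chainCocone Δ' Z hZ) Y]
  simp [chainCocone]
  erw [Subobject.ofLE_arrow, Subobject.ofLE_arrow]

/-- A limit of a nonempty set of subobjects is a greatest lower bound. -/
theorem le_limSub {Δ' : Set (Subobject X)} {W Z Y0 : Subobject X} (hY0 : Y0 ∈ Δ')
    (hc : IsLimSub Δ' W) (hZ : ∀ Y ∈ Δ', Z ≤ Y) : Z ≤ W := by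
  obtain ⟨hW, ⟨c⟩⟩ := hc
  refine Subobject.le_of_comm (c.lift (chainCone Δ' Z hZ)) ?_
  have h1 : c.lift (chainCone Δ' Z hZ) ≫ Subobject.ofLE W Y0 (hW Y0 hY0)
      = Subobject.ofLE Z Y0 (hZ Y0 hY0) := c.fac (chainCone Δ' Z hZ) ⟨Y0, hY0⟩
  erw [← Subobject.ofLE_arrow (hW Y0 hY0), ← Category.assoc, h1,
    Subobject.ofLE_arrow]

theorem isLimSub_empty_bot : IsLimSub (∅ : Set (Subobject X)) ⊥ := by
  refine ⟨fun Y hY => hY.elim, ⟨?_⟩⟩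
  have hz : IsZero (((⊥ : Subobject X) : 𝒜)) :=
    (isZero_zero 𝒜).of_iso Subobject.botCoeIsoZero
  exact
    { lift := fun s => 0
      fac := fun s j => j.2.elim
      uniq := fun s m _ => hz.eq_of_tgt _ _ }

theorem eq_of_epi_ofLE {W Y : Subobject X} (h : W ≤ Y) (he : Epi (Subobject.ofLE W Y h)) :
    W = Y := by
  haveI := he
  haveI : IsIso (Subobject.ofLE W Y h) := isIso_of_mono_of_epi _
  refine le_antisymm h (Subobject.le_of_comm (inv (Subobject.ofLE W Y h)) ?_)
  rw [IsIso.inv_comp_eq]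
  exact (Subobject.ofLE_arrow _).symm

theorem not_isZero_quot {W Y : Subobject X} (h : W ≤ Y) (hne : W ≠ Y) :
    ¬ IsZero (quot W Y h) := by
  intro hz
  have hπ : cokernel.π (Subobject.ofLE W Y h) = 0 := hz.eq_of_tgt _ _
  exact hne (eq_of_epi_ofLE h (Preadditive.epi_of_cokernel_zero hπ))

/-- A mono into the quotient of a covering pair is zero or epi. -/
theorem mono_into_quot {W Y : Subobject X} (h : W ≤ Y)
    (hcov : ∀ V : Subobject X, W ≤ V → V ≤ Y → V = W ∨ V = Y)
    {A : 𝒜} (f : A ⟶ cokernel (Subobject.ofLE W Y h)) [Mono f] :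
    f = 0 ∨ Epi f := by
  have hz : (0 : ((W : Subobject X) : 𝒜) ⟶ A) ≫ f
      = Subobject.ofLE W Y h ≫ cokernel.π (Subobject.ofLE W Y h) := by
    simp [cokernel.condition]
  have key := hcov
    (Subobject.mk (pullback.snd f (cokernel.π (Subobject.ofLE W Y h)) ≫ Y.arrow))
    (Subobject.le_mk_of_comm (pullback.lift 0 (Subobject.ofLE W Y h) hz)
      (by rw [← Category.assoc, pullback.lift_snd, Subobject.ofLE_arrow]))
    (by
      have := Subobject.mk_le_mk_of_comm
        (f₁ := pullback.snd f (cokernel.π (Subobject.ofLE W Y h)) ≫ Y.arrow)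
        (f₂ := Y.arrow) (pullback.snd f (cokernel.π (Subobject.ofLE W Y h))) rfl
      rwa [Subobject.mk_arrow] at this)
  rcases key with hV | hV
  · left
    have hk : Subobject.ofMkLE _ W hV.le ≫ W.arrow
        = pullback.snd f (cokernel.π (Subobject.ofLE W Y h)) ≫ Y.arrow :=
      Subobject.ofMkLE_arrow _
    have hk2 : Subobject.ofMkLE _ W hV.le ≫ Subobject.ofLE W Y h
        = pullback.snd f (cokernel.π (Subobject.ofLE W Y h)) := by
      rw [← cancel_mono Y.arrow, Category.assoc, Subobject.ofLE_arrow, hk]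
    have h0 : pullback.fst f (cokernel.π (Subobject.ofLE W Y h)) ≫ f = 0 := by
      rw [pullback.condition, ← hk2, Category.assoc, cokernel.condition, comp_zero]
    exact zero_of_epi_comp _ h0
  · right
    have hk' : Subobject.ofLEMk Y _ hV.ge
        ≫ (pullback.snd f (cokernel.π (Subobject.ofLE W Y h)) ≫ Y.arrow) = Y.arrow :=
      Subobject.ofLEMk_comp _
    haveI : IsSplitEpi (pullback.snd f (cokernel.π (Subobject.ofLE W Y h))) := by
      refine ⟨⟨⟨Subobject.ofLEMk Y _ hV.ge, ?_⟩⟩⟩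
      rw [← cancel_mono Y.arrow, Category.assoc, Category.id_comp]
      exact hk'
    haveI : Epi (pullback.fst f (cokernel.π (Subobject.ofLE W Y h)) ≫ f) := by
      rw [pullback.condition]
      exact epi_comp _ _
    exact epi_of_epi (pullback.fst f (cokernel.π (Subobject.ofLE W Y h))) f

/-- The quotient of a covering pair of subobjects is simple. -/
theorem simple_quot_of_cover {W Y : Subobject X} (h : W ≤ Y) (hne : W ≠ Y)
    (hcov : ∀ V : Subobject X, W ≤ V → V ≤ Y → V = W ∨ V = Y) :
    Simple (quot W Y h) := by
  have hQnz := not_isZero_quot h hne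
  constructor
  intro A f hf
  constructor
  · intro hiso h0
    haveI := hiso
    have hepi : Epi f := inferInstance
    rw [h0] at hepi
    haveI := hepi
    exact hQnz (IsZero.of_epi_zero A _)
  · intro hne0
    rcases @mono_into_quot _ _ _ _ _ _ h hcov _ f hf with h0 | hepi
    · exact absurd h0 hne0
    · haveI := hepi
      exact @isIso_of_mono_of_epi _ _ _ _ _ f hf hepi

theorem mem_of_maxChain {Δ : Set (Subobject X)} (hΔ : IsPreChain Δ)
    (hmax : ∀ Δ'' : Set (Subobject X), IsPreChain Δ'' → Δ ⊆ Δ'' → Δ = Δ'')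
    {W : Subobject X} (hcmp : ∀ Z ∈ Δ, W ≤ Z ∨ Z ≤ W) : W ∈ Δ := by
  have h := hmax (insert W Δ) (IsChain.insert hΔ fun b hb _ => hcmp b hb)
    (Set.subset_insert _ _)
  rw [h]
  exact Set.mem_insert _ _

theorem maxChain_isLowerCompSeries (hJ : JHS1 X) {Δ : Set (Subobject X)}
    (hΔ : IsPreChain Δ)
    (hmax : ∀ Δ'' : Set (Subobject X), IsPreChain Δ'' → Δ ⊆ Δ'' → Δ = Δ'') :
    IsLowerCompSeries Δ := by
  have hbot : ⊥ ∈ Δ := mem_of_maxChain hΔ hmax fun Z _ => Or.inl bot_le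
  have htop : ⊤ ∈ Δ := mem_of_maxChain hΔ hmax fun Z _ => Or.inr le_top
  refine ⟨⟨hΔ, hbot, htop⟩, ?_, ?_⟩
  · intro Δ' hsub
    obtain ⟨W, hWub, hWcolim⟩ := hJ Δ' (IsChain.mono hsub hΔ)
    refine ⟨W, mem_of_maxChain hΔ hmax ?_, hWub, hWcolim⟩
    intro Z hZ
    by_cases hub : ∀ Y ∈ Δ', Y ≤ Z
    · exact Or.inl (colimSub_le ⟨hWub, hWcolim⟩ hub)
    · push_neg at hub
      obtain ⟨Y, hY, hYZ⟩ := hub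
      have hZY : Z ≤ Y :=
        (hΔ (hsub hY) hZ fun he => hYZ (he ▸ le_refl _)).resolve_left hYZ
      exact Or.inr (hZY.trans (hWub Y hY))
  · intro Y hY W h hpred hne
    rcases hpred with ⟨hY1, hW1⟩ | ⟨hYne, hcolim⟩
    · exact absurd (hW1.trans hY1.symm) hne
    · obtain ⟨hub, hcl⟩ := hcolim
      apply simple_quot_of_cover h hne
      intro V hWV hVY
      have hVmem : V ∈ Δ := by
        apply mem_of_maxChain hΔ hmax
        intro Z hZ
        rcases eq_or_ne Z Y with rfl | hZY
        · exact Or.inl hVY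
        · rcases hΔ hZ hY hZY with hZleY | hYleZ
          · exact Or.inr ((hub Z ⟨hZ, lt_of_le_of_ne hZleY hZY⟩).trans hWV)
          · exact Or.inl (hVY.trans hYleZ)
      by_cases hVY' : V = Y
      · exact Or.inr hVY'
      · exact Or.inl (le_antisymm (hub V ⟨hVmem, lt_of_le_of_ne hVY hVY'⟩) hWV)

theorem maxChain_isUpperCompSeries (hJ : JHS2 X) {Δ : Set (Subobject X)}
    (hΔ : IsPreChain Δ)
    (hmax : ∀ Δ'' : Set (Subobject X), IsPreChain Δ'' → Δ ⊆ Δ'' → Δ = Δ'') :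
    IsUpperCompSeries Δ := by
  have hbot : ⊥ ∈ Δ := mem_of_maxChain hΔ hmax fun Z _ => Or.inl bot_le
  have htop : ⊤ ∈ Δ := mem_of_maxChain hΔ hmax fun Z _ => Or.inr le_top
  refine ⟨⟨hΔ, hbot, htop⟩, ?_, ?_⟩
  · intro Δ' hsub
    rcases Set.eq_empty_or_nonempty Δ' with rfl | ⟨Y0, hY0⟩
    · exact ⟨⊥, hbot, isLimSub_empty_bot⟩
    · obtain ⟨W, hWlb, hWlim⟩ := hJ Δ' (IsChain.mono hsub hΔ)
      refine ⟨W, mem_of_maxChain hΔ hmax ?_, hWlb, hWlim⟩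
      intro Z hZ
      by_cases hlb : ∀ Y ∈ Δ', Z ≤ Y
      · exact Or.inr (le_limSub hY0 ⟨hWlb, hWlim⟩ hlb)
      · push_neg at hlb
        obtain ⟨Y, hY, hZY⟩ := hlb
        have hYZ : Y ≤ Z :=
          (hΔ (hsub hY) hZ fun he => hZY (he ▸ le_refl _)).resolve_right hZY
        exact Or.inl ((hWlb Y hY).trans hYZ)
  · intro Y hY W h hsucc hne
    rcases hsucc with ⟨hY1, hW1⟩ | ⟨hYne, hlim⟩
    · exact absurd (hW1.trans hY1.symm) hne
    · obtain ⟨hlb, hcl⟩ := hlim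
      apply simple_quot_of_cover h (Ne.symm hne)
      intro V hYV hVW
      have hVmem : V ∈ Δ := by
        apply mem_of_maxChain hΔ hmax
        intro Z hZ
        rcases eq_or_ne Z Y with rfl | hZY
        · exact Or.inr hYV
        · rcases hΔ hZ hY hZY with hZleY | hYleZ
          · exact Or.inr (hZleY.trans hYV)
          · exact Or.inl (hVW.trans (hlb Z ⟨hZ, lt_of_le_of_ne hYleZ (Ne.symm hZY)⟩))
      by_cases hVY' : V = Y
      · exact Or.inl hVY'
      · exact Or.inr
          (le_antisymm hVW (hlb V ⟨hVmem, lt_of_le_of_ne hYV fun e => hVY' e.symm⟩))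

/-- Proposition 3.14: existence of lower (respectively upper) composition series for
subobject cocomplete (respectively complete) objects. -/
theorem statement7 [EssentiallySmall.{w} 𝒜] (X : 𝒜) :
    (JHS1 X →
      (∃ Δ : Set (Subobject X), IsLowerCompSeries Δ) ∧
      ∀ Δ : Set (Subobject X), IsPreChain Δ →
        ((∀ Δ'' : Set (Subobject X), IsPreChain Δ'' → Δ ⊆ Δ'' → Δ = Δ'') →
            IsLowerCompSeries Δ) ∧
          ∃ Δ' : Set (Subobject X), IsLowerCompSeries Δ' ∧ Δ ⊆ Δ') ∧
    (JHS2 X →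
      (∃ Δ : Set (Subobject X), IsUpperCompSeries Δ) ∧
      ∀ Δ : Set (Subobject X), IsPreChain Δ →
        ((∀ Δ'' : Set (Subobject X), IsPreChain Δ'' → Δ ⊆ Δ'' → Δ = Δ'') →
            IsUpperCompSeries Δ) ∧
          ∃ Δ' : Set (Subobject X), IsUpperCompSeries Δ' ∧ Δ ⊆ Δ') := by
  constructor
  · intro hJ
    have main : ∀ Δ : Set (Subobject X), IsPreChain Δ →
        ((∀ Δ'' : Set (Subobject X), IsPreChain Δ'' → Δ ⊆ Δ'' → Δ = Δ'') →
            IsLowerCompSeries Δ) ∧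
          ∃ Δ' : Set (Subobject X), IsLowerCompSeries Δ' ∧ Δ ⊆ Δ' := by
      intro Δ hΔ
      refine ⟨fun hmax => maxChain_isLowerCompSeries hJ hΔ hmax, ?_⟩
      obtain ⟨Γ, hΓmax, hsub⟩ := IsChain.exists_maxChain hΔ
      exact ⟨Γ, maxChain_isLowerCompSeries hJ hΓmax.1
        (fun Δ'' h1 h2 => hΓmax.2 h1 h2), hsub⟩
    refine ⟨?_, main⟩
    obtain ⟨Γ, hΓ, _⟩ := (main ∅ (Set.pairwise_empty _)).2
    exact ⟨Γ, hΓ⟩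
  · intro hJ
    have main : ∀ Δ : Set (Subobject X), IsPreChain Δ →
        ((∀ Δ'' : Set (Subobject X), IsPreChain Δ'' → Δ ⊆ Δ'' → Δ = Δ'') →
            IsUpperCompSeries Δ) ∧
          ∃ Δ' : Set (Subobject X), IsUpperCompSeries Δ' ∧ Δ ⊆ Δ' := by
      intro Δ hΔ
      refine ⟨fun hmax => maxChain_isUpperCompSeries hJ hΔ hmax, ?_⟩
      obtain ⟨Γ, hΓmax, hsub⟩ := IsChain.exists_maxChain hΔ
      exact ⟨Γ, maxChain_isUpperCompSeries hJ hΓmax.1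
        (fun Δ'' h1 h2 => hΓmax.2 h1 h2), hsub⟩
    refine ⟨?_, main⟩
    obtain ⟨Γ, hΓ, _⟩ := (main ∅ (Set.pairwise_empty _)).2
    exact ⟨Γ, hΓ⟩

end JHS
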